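/- Let P_0 ⊇ P_1 ⊇ ⋯ be a decreasing sequence of measurable sets with empty intersection in a measure space, let s_i ≥ 0, n ∈ ℕ, 1 ≤ p < ∞. Then ‖sup_{i≥0} 2^{in/p} s_i 1_{P_i}‖_{L_p}^p = ∑_{j=0}^∞ sup_{0≤i≤j}(2^{in} s_i^p) · μ(P_j ∖ P_{j+1}). -/

import Mathlib

open Set MeasureTheory ENNReal

/-- Let `P_0 ⊇ P_1 ⊇ ⋯` be a decreasing sequence of measurable sets with
empty intersection in a measure space, `s_i ≥ 0`, `n ∈ ℕ`, `1 ≤ p < ∞`. Then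
`‖sup_i 2^{in/p} s_i 1_{P_i}‖_{L_p}^p = ∑_j sup_{0≤i≤j}(2^{in} s_i^p) · μ(P_j ∖ P_{j+1})`. -/
theorem lp_norm_sup_indicator {X : Type*} [MeasurableSpace X] (μ : Measure X)
    (P : ℕ → Set X) (hmeas : ∀ j, MeasurableSet (P j))
    (hdec : ∀ j, P (j + 1) ⊆ P j) (hempty : ⋂ j, P j = ∅)
    (s : ℕ → ℝ) (hs : ∀ i, 0 ≤ s i) (n : ℕ) (p : ℝ) (hp : 1 ≤ p) :
    ∫⁻ x, (⨆ i : ℕ, ENNReal.ofReal ((2 : ℝ) ^ ((i : ℝ) * n / p) * s i) *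
        (P i).indicator (fun _ => (1 : ℝ≥0∞)) x) ^ p ∂μ
      = ∑' j : ℕ, (⨆ i ∈ Finset.range (j + 1),
          ENNReal.ofReal ((2 : ℝ) ^ ((i : ℝ) * n) * s i ^ p)) * μ (P j \ P (j + 1)) := by
  have hp0 : (0:ℝ) < p := lt_of_lt_of_le one_pos hp
  have hanti : Antitone P := antitone_nat_of_succ_le hdec
  set c : ℕ → ℝ≥0∞ := fun i => ENNReal.ofReal ((2 : ℝ) ^ ((i : ℝ) * n / p) * s i) with hc
  set f : X → ℝ≥0∞ := fun x =>
    (⨆ i : ℕ, c i * (P i).indicator (fun _ => (1 : ℝ≥0∞)) x) ^ p with hf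
  set A : ℕ → Set X := fun j => P j \ P (j + 1) with hA
  have hAmeas : ∀ j, MeasurableSet (A j) := fun j => (hmeas j).diff (hmeas (j + 1))
  -- a point in some P i lies in some A j
  have hmem : ∀ x i, x ∈ P i → ∃ j, x ∈ A j := by
    intro x i hx
    have hex : ∃ k, x ∉ P k := by
      by_contra h
      push_neg at h
      have : x ∈ ⋂ j, P j := Set.mem_iInter.2 h
      rw [hempty] at this
      exact this
    classical
    let N := Nat.find hex
    have hN : x ∉ P N := Nat.find_spec hex
    have hNpos : 0 < N := by
      rcases Nat.eq_zero_or_pos N with h0 | h0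
      · exfalso; exact hN (h0 ▸ hanti (Nat.zero_le i) hx)
      · exact h0
    refine ⟨N - 1, ?_, ?_⟩
    · by_contra h
      exact Nat.find_min hex (Nat.sub_lt hNpos one_pos) h
    · rwa [Nat.sub_add_cancel hNpos]
  -- f vanishes off ⋃ j, A j
  have hsupp : ∀ x, x ∉ ⋃ j, A j → f x = 0 := by
    intro x hx
    have hnotP : ∀ i, x ∉ P i := by
      intro i hxi
      obtain ⟨j, hj⟩ := hmem x i hxi
      exact hx (Set.mem_iUnion.2 ⟨j, hj⟩)
    have : (⨆ i : ℕ, c i * (P i).indicator (fun _ => (1 : ℝ≥0∞)) x) = 0 := by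
      simp only [Set.indicator_of_notMem (hnotP _), mul_zero, iSup_zero]
    simp only [hf, this]
    exact ENNReal.zero_rpow_of_pos hp0
  -- f is constant on each A j
  have hconst : ∀ j, ∀ x ∈ A j,
      f x = ⨆ i ∈ Finset.range (j + 1), ENNReal.ofReal ((2 : ℝ) ^ ((i : ℝ) * n) * s i ^ p) := by
    intro j x hx
    have hsup : (⨆ i : ℕ, c i * (P i).indicator (fun _ => (1 : ℝ≥0∞)) x)
        = ⨆ i ∈ Finset.range (j + 1), c i := by
      apply le_antisymm
      · refine iSup_le fun i => ?_
        by_cases hij : i ≤ j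
        · have hxi : x ∈ P i := hanti hij hx.1
          rw [Set.indicator_of_mem hxi, mul_one]
          exact le_iSup₂ (f := fun i _ => c i) i (Finset.mem_range.2 (Nat.lt_succ_of_le hij))
        · have hxi : x ∉ P i := fun h => hx.2 (hanti (Nat.succ_le_of_lt (not_le.1 hij)) h)
          rw [Set.indicator_of_notMem hxi, mul_zero]
          exact zero_le
      · refine iSup₂_le fun i hi => ?_
        have hxi : x ∈ P i := hanti (Nat.lt_succ_iff.1 (Finset.mem_range.1 hi)) hx.1
        have hci : c i = c i * (P i).indicator (fun _ => (1:ℝ≥0∞)) x := by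
          rw [Set.indicator_of_mem hxi, mul_one]
        rw [hci]
        exact le_iSup (fun i => c i * (P i).indicator (fun _ => (1:ℝ≥0∞)) x) i
    have hrpow : ∀ i : ℕ, c i ^ p = ENNReal.ofReal ((2 : ℝ) ^ ((i : ℝ) * n) * s i ^ p) := by
      intro i
      have h2 : (0:ℝ) ≤ (2 : ℝ) ^ ((i : ℝ) * n / p) := (Real.rpow_pos_of_pos two_pos _).le
      rw [hc, ENNReal.ofReal_rpow_of_nonneg (mul_nonneg h2 (hs i)) hp0.le,
        Real.mul_rpow h2 (hs i), ← Real.rpow_mul (by norm_num : (0:ℝ) ≤ 2),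
        div_mul_cancel₀ _ hp0.ne']
    have := (ENNReal.orderIsoRpow p hp0).map_iSup
      (fun i : ℕ => ⨆ _ : i ∈ Finset.range (j + 1), c i)
    simp only [ENNReal.orderIsoRpow_apply] at this
    show (⨆ i : ℕ, c i * (P i).indicator (fun _ => (1:ℝ≥0∞)) x) ^ p = _
    rw [hsup, this]
    refine iSup_congr fun i => ?_
    by_cases hmem' : i ∈ Finset.range (j + 1)
    · rw [iSup_pos hmem', iSup_pos hmem', hrpow]
    · rw [iSup_neg hmem', iSup_neg hmem']; simpa using ENNReal.zero_rpow_of_pos hp0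
  -- disjointness
  have hdisj : Pairwise (Function.onFun Disjoint A) := by
    have key : ∀ i j, i < j → Disjoint (A i) (A j) := by
      intro i j hij
      refine Set.disjoint_left.2 fun x hxi hxj => ?_
      exact hxi.2 (hanti (Nat.succ_le_of_lt hij) hxj.1)
    intro i j hij
    rcases lt_or_gt_of_ne hij with h | h
    · exact key i j h
    · exact (key j i h).symm
  calc ∫⁻ x, f x ∂μ = ∫⁻ x in ⋃ j, A j, f x ∂μ := by
        rw [← lintegral_indicator (MeasurableSet.iUnion hAmeas) f]
        congr 1
        ext x
        by_cases hx : x ∈ ⋃ j, A j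
        · rw [Set.indicator_of_mem hx]
        · rw [Set.indicator_of_notMem hx, hsupp x hx]
    _ = ∑' j, ∫⁻ x in A j, f x ∂μ := lintegral_iUnion hAmeas hdisj f
    _ = ∑' j : ℕ, (⨆ i ∈ Finset.range (j + 1),
          ENNReal.ofReal ((2 : ℝ) ^ ((i : ℝ) * n) * s i ^ p)) * μ (A j) := by
        refine tsum_congr fun j => ?_
        rw [setLIntegral_congr_fun (hAmeas j) (fun x hx => hconst j x hx), setLIntegral_const]
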